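/- arXiv:1203.2686 — 2 statements merged into one kernel-verified Lean document; each statement's English description precedes it below -/
import Mathlib

section
/- For the standard n-dimensional space V_n = K^n with the standard inner product ⟨x_i, x_j⟩ = δ_{ij}, the pairing β_c(z_{c'}) = δ_{c,c'} holds for all chord diagrams c, c' on {1,...,2N} when n ≥ N, where β_c is the product of inner-product contractions along the pairs of c and z_c is the tensor obtained by placing x_1⊗x_1, ..., x_N⊗x_N into the slot positions determined by c'. -/
structure ChordDiagram (N : ℕ) where
  pair : Fin N → Fin (2 * N) × Fin (2 * N)
  bij : Function.Bijective
    (fun p : Fin N × Bool => if p.2 then (pair p.1).1 else (pair p.1).2)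

def ChordDiagram.toPairset {N : ℕ} (c : ChordDiagram N) : Finset (Finset (Fin (2 * N))) :=
  Finset.image (fun r => ({(c.pair r).1, (c.pair r).2} : Finset (Fin (2 * N)))) Finset.univ

def betaFun {K : Type*} [Field K] {N n : ℕ} (c : ChordDiagram N)
    (v : Fin (2 * N) → (Fin n → K)) : K :=
  ∏ r : Fin N, ∑ i : Fin n, v (c.pair r).1 i * v (c.pair r).2 i

lemma cd_ne {N : ℕ} (d : ChordDiagram N) (r : Fin N) : (d.pair r).1 ≠ (d.pair r).2 := by
  intro h
  have := d.bij.injective (a₁ := (r, true)) (a₂ := (r, false)) (by simpa using h)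
  simp at this

lemma cd_mem {N : ℕ} (d : ChordDiagram N) {r1 r2 : Fin N}
    (h : (d.pair r1).1 = (d.pair r2).1 ∨ (d.pair r1).1 = (d.pair r2).2) : r1 = r2 := by
  rcases h with h | h
  · have := d.bij.injective (a₁ := (r1, true)) (a₂ := (r2, true)) (by simpa using h)
    exact (Prod.ext_iff.1 this).1
  · have := d.bij.injective (a₁ := (r1, true)) (a₂ := (r2, false)) (by simpa using h)
    exact (Prod.ext_iff.1 this).1

/-- for `n ≥ N`, `β_c(z_{c'}) = δ_{c,c'}`, where `z_{c'}` is the tuple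
placing `x_r` (the `r`-th standard basis vector) in both slots of the `r`-th pair of
`c'`, and equality of chord diagrams means equality of the underlying partitions. -/
theorem stmt_2 {K : Type*} [Field K] [CharZero K] {N n : ℕ} (hn : N ≤ n)
    (c c' : ChordDiagram N) (slot' : Fin (2 * N) → Fin N)
    (h1 : ∀ r, slot' (c'.pair r).1 = r) (h2 : ∀ r, slot' (c'.pair r).2 = r) :
    betaFun c (fun i => (Pi.single (Fin.castLE hn (slot' i)) 1 : Fin n → K))
      = (if c.toPairset = c'.toPairset then 1 else 0) := by
  -- every i belongs to the pair numbered slot' i of c'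
  have hmem : ∀ i : Fin (2 * N),
      i = (c'.pair (slot' i)).1 ∨ i = (c'.pair (slot' i)).2 := by
    intro i
    obtain ⟨⟨r, b⟩, hb⟩ := c'.bij.surjective i
    cases b
    · have hb' : (c'.pair r).2 = i := by simpa using hb
      right; rw [← hb', h2]
    · have hb' : (c'.pair r).1 = i := by simpa using hb
      left; rw [← hb', h1]
  have hbeta : betaFun c (fun i => (Pi.single (Fin.castLE hn (slot' i)) 1 : Fin n → K))
      = ∏ r : Fin N, (if slot' (c.pair r).1 = slot' (c.pair r).2 then (1:K) else 0) := by
    unfold betaFun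
    refine Finset.prod_congr rfl fun r _ => ?_
    by_cases h : slot' (c.pair r).1 = slot' (c.pair r).2
    · rw [if_pos h]; dsimp only; rw [h]; simp [Pi.single_apply]
    · have h' : Fin.castLE hn (slot' (c.pair r).2) ≠ Fin.castLE hn (slot' (c.pair r).1) :=
        fun hc => h ((Fin.castLE_injective hn) hc).symm
      rw [if_neg h]
      dsimp only
      simp [Pi.single_apply, ite_and, Finset.sum_ite_eq, h']
  rw [hbeta]
  by_cases P : ∀ r : Fin N, slot' (c.pair r).1 = slot' (c.pair r).2
  · -- product is 1 and pairsets equal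
    have hpairs : ∀ r : Fin N,
        ({(c.pair r).1, (c.pair r).2} : Finset (Fin (2*N)))
          = {(c'.pair (slot' (c.pair r).1)).1, (c'.pair (slot' (c.pair r).1)).2} := by
      intro r
      apply Finset.eq_of_subset_of_card_le
      · intro x hx
        simp only [Finset.mem_insert, Finset.mem_singleton] at hx ⊢
        rcases hx with rfl | rfl
        · exact hmem _
        · rw [P r]; exact hmem _
      · rw [Finset.card_pair (cd_ne c' _), Finset.card_pair (cd_ne c r)]
    have hinj : Function.Injective (fun r => slot' (c.pair r).1) := by
      intro r1 r2 h
      dsimp only at h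
      have : ({(c.pair r1).1, (c.pair r1).2} : Finset (Fin (2*N)))
          = {(c.pair r2).1, (c.pair r2).2} := by
        rw [hpairs r1, hpairs r2, h]
      have h1' : (c.pair r1).1 ∈ ({(c.pair r2).1, (c.pair r2).2} : Finset (Fin (2*N))) := by
        rw [← this]; simp
      simp only [Finset.mem_insert, Finset.mem_singleton] at h1'
      exact cd_mem c h1'
    have hsurj := Finite.surjective_of_injective hinj
    have hps : c.toPairset = c'.toPairset := by
      unfold ChordDiagram.toPairset
      apply Finset.Subset.antisymm
      · intro s hs
        simp only [Finset.mem_image, Finset.mem_univ, true_and] at hs ⊢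
        obtain ⟨r, rfl⟩ := hs
        exact ⟨_, (hpairs r).symm⟩
      · intro s hs
        simp only [Finset.mem_image, Finset.mem_univ, true_and] at hs ⊢
        obtain ⟨r', rfl⟩ := hs
        obtain ⟨r, hr⟩ := hsurj r'
        dsimp only at hr
        exact ⟨r, by rw [hpairs r, hr]⟩
    rw [if_pos hps]
    exact Finset.prod_eq_one fun r _ => if_pos (P r)
  · push_neg at P
    obtain ⟨r, hr⟩ := P
    rw [Finset.prod_eq_zero (Finset.mem_univ r) (show (if slot' (c.pair r).1 = slot' (c.pair r).2 then (1:K) else 0) = 0 from if_neg hr)]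
    rw [if_neg]
    intro hps
    apply hr
    have : ({(c.pair r).1, (c.pair r).2} : Finset (Fin (2*N))) ∈ c'.toPairset := by
      rw [← hps]
      exact Finset.mem_image_of_mem _ (Finset.mem_univ r)
    simp only [ChordDiagram.toPairset, Finset.mem_image, Finset.mem_univ, true_and] at this
    obtain ⟨r', hr'⟩ := this
    have ha : (c.pair r).1 ∈ ({(c'.pair r').1, (c'.pair r').2} : Finset (Fin (2*N))) := by
      rw [hr']; simp
    have hb : (c.pair r).2 ∈ ({(c'.pair r').1, (c'.pair r').2} : Finset (Fin (2*N))) := by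
      rw [hr']; simp
    simp only [Finset.mem_insert, Finset.mem_singleton] at ha hb
    have sa : slot' (c.pair r).1 = r' := by rcases ha with h | h <;> rw [h] <;> [exact h1 r'; exact h2 r']
    have sb : slot' (c.pair r).2 = r' := by rcases hb with h | h <;> rw [h] <;> [exact h1 r'; exact h2 r']
    rw [sa, sb]
end

section
/- The functionals {β_c : c a chord diagram on {1,...,2N}} are linearly independent as elements of ((V_n)^{⊗2N})* whenever n ≥ N. -/
namespace ChordDiagram

variable {N : ℕ}

noncomputable def equiv (c : ChordDiagram N) : Fin N × Bool ≃ Fin (2 * N) :=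
  Equiv.ofBijective _ c.bij

lemma equiv_true (c : ChordDiagram N) (r : Fin N) : c.equiv (r, true) = (c.pair r).1 := rfl
lemma equiv_false (c : ChordDiagram N) (r : Fin N) : c.equiv (r, false) = (c.pair r).2 := rfl

noncomputable def color (c : ChordDiagram N) (k : Fin (2 * N)) : Fin N :=
  (c.equiv.symm k).1

lemma color_fst (c : ChordDiagram N) (r : Fin N) : c.color (c.pair r).1 = r := by
  rw [color, ← c.equiv_true r, Equiv.symm_apply_apply]

lemma color_snd (c : ChordDiagram N) (r : Fin N) : c.color (c.pair r).2 = r := by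
  rw [color, ← c.equiv_false r, Equiv.symm_apply_apply]

lemma color_spec (c : ChordDiagram N) (x : Fin (2 * N)) :
    x = (c.pair (c.color x)).1 ∨ x = (c.pair (c.color x)).2 := by
  rcases h : c.equiv.symm x with ⟨r, b⟩
  have hx : x = c.equiv (r, b) := by rw [← h, Equiv.apply_symm_apply]
  have hc : c.color x = r := by rw [color, h]
  cases b
  · right; rw [hc, ← c.equiv_false r, hx]
  · left; rw [hc, ← c.equiv_true r, hx]

lemma ne_pair (c : ChordDiagram N) (r : Fin N) : (c.pair r).1 ≠ (c.pair r).2 := by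
  rw [← c.equiv_true r, ← c.equiv_false r]
  intro h
  simpa using c.equiv.injective h

lemma card_chord (c : ChordDiagram N) (r : Fin N) :
    ({(c.pair r).1, (c.pair r).2} : Finset (Fin (2 * N))).card = 2 :=
  Finset.card_pair (c.ne_pair r)

lemma chord_inj (c : ChordDiagram N) : Function.Injective
    (fun r => ({(c.pair r).1, (c.pair r).2} : Finset (Fin (2 * N)))) := by
  intro r s h
  simp only [Finset.ext_iff] at h
  have := (h (c.pair r).1).1 (by simp)
  simp only [Finset.mem_insert, Finset.mem_singleton] at this
  rcases this with h1 | h1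
  · have := congrArg c.color h1; rwa [c.color_fst, c.color_fst] at this
  · have := congrArg c.color h1; rwa [c.color_fst, c.color_snd] at this

lemma card_toPairset (c : ChordDiagram N) : c.toPairset.card = N := by
  rw [toPairset, Finset.card_image_of_injective _ c.chord_inj, Finset.card_univ,
    Fintype.card_fin]

/-- If every chord of `c'` is monochromatic for `c`'s coloring, the pairsets agree. -/
lemma pairset_eq_of_color (c c' : ChordDiagram N)
    (h : ∀ r, c.color (c'.pair r).1 = c.color (c'.pair r).2) :
    c'.toPairset = c.toPairset := by
  apply Finset.eq_of_subset_of_card_le _ (by rw [c.card_toPairset, c'.card_toPairset])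
  intro t ht
  simp only [toPairset, Finset.mem_image, Finset.mem_univ, true_and] at ht ⊢
  obtain ⟨r, rfl⟩ := ht
  refine ⟨c.color (c'.pair r).1, ?_⟩
  have key : ({(c'.pair r).1, (c'.pair r).2} : Finset (Fin (2 * N))) =
      {(c.pair (c.color (c'.pair r).1)).1, (c.pair (c.color (c'.pair r).1)).2} := by
    apply Finset.eq_of_subset_of_card_le
    · intro x hx
      simp only [Finset.mem_insert, Finset.mem_singleton] at hx ⊢
      rcases hx with rfl | rfl
      · exact c.color_spec _
      · rw [h r]; exact c.color_spec _
    · rw [c.card_chord, c'.card_chord]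
  exact key.symm

lemma color_eq_of_pairset (c c' : ChordDiagram N) (hp : c'.toPairset = c.toPairset)
    (r : Fin N) : c.color (c'.pair r).1 = c.color (c'.pair r).2 := by
  have ht : ({(c'.pair r).1, (c'.pair r).2} : Finset (Fin (2 * N))) ∈ c.toPairset := by
    rw [← hp, toPairset]
    exact Finset.mem_image_of_mem _ (Finset.mem_univ r)
  simp only [toPairset, Finset.mem_image, Finset.mem_univ, true_and] at ht
  obtain ⟨s, hs⟩ := ht
  have h1 : (c'.pair r).1 ∈ ({(c.pair s).1, (c.pair s).2} : Finset (Fin (2 * N))) := by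
    rw [hs]; simp
  have h2 : (c'.pair r).2 ∈ ({(c.pair s).1, (c.pair s).2} : Finset (Fin (2 * N))) := by
    rw [hs]; simp
  simp only [Finset.mem_insert, Finset.mem_singleton] at h1 h2
  rcases h1 with h1 | h1 <;> rcases h2 with h2 | h2 <;>
    rw [h1, h2] <;> simp [color_fst, color_snd]

end ChordDiagram


noncomputable def testVec {K : Type*} [Field K] {N n : ℕ} (hn : N ≤ n)
    (c : ChordDiagram N) : Fin (2 * N) → Fin n → K :=
  fun k => Pi.single (Fin.castLE hn (c.color k)) 1

lemma inner_single {K : Type*} [Field K] {n : ℕ} (a b : Fin n) :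
    ∑ i : Fin n, (if i = a then (1:K) else 0) * (if i = b then 1 else 0)
      = if a = b then 1 else 0 := by
  simp [ite_and, Finset.sum_ite_eq, eq_comm]

lemma beta_testVec {K : Type*} [Field K] {N n : ℕ} (hn : N ≤ n)
    (c c' : ChordDiagram N) :
    betaFun c' (testVec hn c) = if c'.toPairset = c.toPairset then (1:K) else 0 := by
  have hval : ∀ r : Fin N,
      (∑ i : Fin n, testVec (K := K) hn c (c'.pair r).1 i * testVec hn c (c'.pair r).2 i)
        = if c.color (c'.pair r).1 = c.color (c'.pair r).2 then 1 else 0 := by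
    intro r
    simp only [testVec, Pi.single_apply]
    rw [inner_single]
    congr 1
    simp [Fin.castLE_inj]  -- hopefully proves iff; else adjust
  unfold betaFun
  split_ifs with hp
  · apply Finset.prod_eq_one
    intro r _
    rw [hval r, if_pos (c.color_eq_of_pairset c' hp r)]
  · by_cases hc : ∀ r, c.color (c'.pair r).1 = c.color (c'.pair r).2
    · exact absurd (c.pairset_eq_of_color c' hc) hp
    · push_neg at hc
      obtain ⟨r, hr⟩ := hc
      exact Finset.prod_eq_zero (Finset.mem_univ r) (by rw [hval r, if_neg hr])

/-- the functionals `β_c`, for pairwise distinct chord diagrams `c` on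
`{1,…,2N}`, are linearly independent whenever `n ≥ N`. -/
theorem stmt_4 {K : Type*} [Field K] [CharZero K] {N n : ℕ} (hn : N ≤ n)
    {ι : Type*} (cd : ι → ChordDiagram N)
    (hinj : Function.Injective (fun a => (cd a).toPairset)) :
    LinearIndependent K
      (fun a : ι => (betaFun (cd a) : (Fin (2 * N) → (Fin n → K)) → K)) := by
  classical
  rw [linearIndependent_iff']
  intro s g h i hi
  have hv := congrFun h (testVec hn (cd i))
  simp only [Finset.sum_apply, Pi.smul_apply, smul_eq_mul, Pi.zero_apply] at hv
  have hterm : ∀ j ∈ s, g j * betaFun (cd j) (testVec hn (cd i))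
      = if j = i then g j else 0 := by
    intro j _
    rw [beta_testVec hn (cd i) (cd j)]
    by_cases hj : j = i
    · subst hj; simp
    · rw [if_neg (fun hpe => hj (hinj hpe)), mul_zero, if_neg hj]
  rw [Finset.sum_congr rfl hterm, Finset.sum_ite_eq' s i g, if_pos hi] at hv
  exact hv
end
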